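/- Let V be a finite-dimensional graded vector space V = ⊕_{k=0}^{N} G_k with grades forming a symmetric unimodal sequence of dimensions, and let X: V → V be a nilpotent operator with X(G_k) ⊆ G_{k+1} that is part of an 𝔰𝔩_2-triple (X, Y, H) where H acts on G_k by the scalar 2k − N. Suppose ψ: V → V is a linear map satisfying ψ(F_k) ⊆ F_{k+1} for the filtration F_k = ⊕_{ℓ≥k} G_ℓ, and π_{k+1} ∘ ψ ∘ π_k = c · X for all k, where c ∈ ℂ, c ≠ 0, and π_k is the projection onto G_k. Then the Jordan block sizes (with multiplicities) of ψ coincide with those of X. -/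

import Mathlib

open Module
set_option linter.unusedSectionVars false
set_option maxHeartbeats 1000000

section Aux
variable {V : Type*} [AddCommGroup V] [Module ℂ V] [FiniteDimensional ℂ V]

private lemma aux_finrank_map_eq (f : Module.End ℂ V) (P : Submodule ℂ V)
    (h : ∀ v ∈ P, f v = 0 → v = 0) :
    Module.finrank ℂ (P.map f) = Module.finrank ℂ P := by
  have hker : LinearMap.ker (f ∘ₗ P.subtype) = ⊥ := by
    rw [LinearMap.ker_eq_bot']
    intro m hm
    exact Subtype.ext (h m m.2 hm)
  have := LinearMap.finrank_range_of_inj (LinearMap.ker_eq_bot.mp hker)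
  rwa [LinearMap.range_comp, Submodule.range_subtype] at this

private lemma aux_disj (G : ℕ → Submodule ℂ V) (hind : iSupIndep G) :
    ∀ (s : Finset ℕ) (u : Finset ℕ), (∀ i ∈ s, i ∉ u) →
      Disjoint (⨆ i ∈ s, G i) (⨆ i ∈ u, G i) := by
  intro s
  induction s using Finset.induction_on with
  | empty => intro u _; simp
  | insert a s ha ih =>
    intro u hsu
    rw [Finset.iSup_insert]
    have h2 : Disjoint (⨆ x ∈ s, G x) (⨆ i ∈ u, G i) :=
      ih u fun i hi => hsu i (Finset.mem_insert_of_mem hi)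
    have ha' : a ∉ s ∪ u := by
      simp only [Finset.mem_union]
      push_neg
      exact ⟨ha, hsu a (Finset.mem_insert_self a s)⟩
    have h1 : Disjoint (G a) (⨆ i ∈ s ∪ u, G i) := hind.disjoint_biSup ha'
    rw [Finset.iSup_union] at h1
    exact Disjoint.disjoint_sup_left_of_disjoint_sup_right h2 h1

private lemma aux_sum (P : ℕ → Submodule ℂ V) (hind : iSupIndep P) :
    ∀ s : Finset ℕ, Module.finrank ℂ ↥(⨆ i ∈ s, P i) = ∑ i ∈ s, Module.finrank ℂ (P i) := by
  intro s
  induction s using Finset.induction_on with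
  | empty => simp
  | insert a s ha ih =>
    rw [Finset.iSup_insert, Finset.sum_insert ha]
    have hdis : Disjoint (P a) (⨆ i ∈ s, P i) := hind.disjoint_biSup ha
    have h2 := Submodule.finrank_sup_add_finrank_inf_eq (P a) (⨆ i ∈ s, P i)
    rw [hdis.eq_bot, finrank_bot, add_zero] at h2
    rw [h2, ih]

private lemma aux_aeval (f : Module.End ℂ V) (cv : ℂ) (v : V) (hv : f v = cv • v) :
    ∀ p : Polynomial ℂ, (Polynomial.aeval f p) v = p.eval cv • v := by
  have hpow : ∀ n : ℕ, (f ^ n) v = cv ^ n • v := by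
    intro n
    induction n with
    | zero => simp
    | succ n ih =>
      rw [pow_succ, Module.End.mul_apply, hv, map_smul, ih, smul_smul, ← pow_succ']
  intro p
  induction p using Polynomial.induction_on' with
  | add p q hp hq => simp [hp, hq, add_smul]
  | monomial n a =>
    simp [Polynomial.aeval_monomial, Module.algebraMap_end_apply, hpow n, smul_smul, mul_comm]

end Aux

/-- let `V = ⊕_{k=0}^N G_k` be graded with symmetric unimodal
dimension sequence, let `(X, Y, H)` be an `𝔰𝔩₂`-triple with `X(G_k) ⊆ G_{k+1}`
and `H` acting on `G_k` by `2k − N`, and let `ψ` be a linear map with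
`ψ(F_k) ⊆ F_{k+1}` (where `F_k = ⊕_{ℓ≥k} G_ℓ`) whose leading superdiagonal part
is `c·X` with `c ≠ 0`.  Then the Jordan block sizes (with multiplicities) of `ψ`
coincide with those of `X`; equivalently, `rank ψ^s = rank X^s` for all `s`. -/
theorem jordan_type_of_perturbation {V : Type*} [AddCommGroup V] [Module ℂ V]
    [FiniteDimensional ℂ V]
    (N : ℕ) (G : ℕ → Submodule ℂ V) (hG : DirectSum.IsInternal G)
    (hGN : ∀ k, N < k → G k = ⊥)
    (hsym : ∀ k ≤ N, Module.finrank ℂ (G k) = Module.finrank ℂ (G (N - k)))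
    (huni : ∃ k0 ≤ N,
      (∀ k l, k ≤ l → l ≤ k0 → Module.finrank ℂ (G k) ≤ Module.finrank ℂ (G l))
      ∧ (∀ k l, k0 ≤ k → k ≤ l → Module.finrank ℂ (G l) ≤ Module.finrank ℂ (G k)))
    (X Y H : Module.End ℂ V)
    (hXgr : ∀ k, (G k).map X ≤ G (k + 1))
    (hHX : H * X - X * H = (2 : ℂ) • X)
    (hHY : H * Y - Y * H = (-2 : ℂ) • Y)
    (hXY : X * Y - Y * X = H)
    (hH : ∀ k, ∀ v ∈ G k, H v = (((2 * k : ℤ) - (N : ℤ)) : ℂ) • v)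
    (ψ : Module.End ℂ V) (c : ℂ) (hc : c ≠ 0)
    (hψF : ∀ k, ∀ v ∈ G k, ψ v ∈ ⨆ l, ⨆ (_ : k + 1 ≤ l), G l)
    (hlead : ∀ k, ∀ v ∈ G k, ψ v - c • X v ∈ ⨆ l, ⨆ (_ : k + 2 ≤ l), G l) :
    ∀ s : ℕ, Module.finrank ℂ (LinearMap.range (ψ ^ s))
      = Module.finrank ℂ (LinearMap.range (X ^ s)) := by
  classical
  intro s
  have hind : iSupIndep G := hG.submodule_iSupIndep
  set F : ℕ → Submodule ℂ V := fun k => ⨆ l, ⨆ (_ : k ≤ l), G l with hFdef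
  set Lam : ℕ → ℂ := fun k => (((2 * k : ℤ) - (N : ℤ)) : ℂ) with hLamdef
  have hHG : ∀ k, ∀ v ∈ G k, H v = Lam k • v := hH
  have hLamcast : ∀ k : ℕ, Lam k = ((2 * (k : ℤ) - (N : ℤ) : ℤ) : ℂ) := by
    intro k
    simp only [hLamdef]
    push_cast
    ring
  have hGleF : ∀ {k l : ℕ}, k ≤ l → G l ≤ F k := by
    intro k l h
    exact le_iSup_of_le l (le_iSup (fun _ : k ≤ l => G l) h)
  have hFmono : ∀ {j k : ℕ}, j ≤ k → F k ≤ F j := by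
    intro j k h
    exact iSup₂_le fun l hl => hGleF (h.trans hl)
  have hFF : ∀ k, F k = ⨆ i ∈ Finset.Icc k N, G i := by
    intro k
    apply le_antisymm
    · apply iSup₂_le; intro l hl
      rcases le_or_gt l N with h | h
      · exact le_iSup_of_le l (le_iSup (fun _ : l ∈ Finset.Icc k N => G l)
          (Finset.mem_Icc.mpr ⟨hl, h⟩))
      · rw [hGN l h]; exact bot_le
    · exact iSup₂_le fun l hl => hGleF (Finset.mem_Icc.mp hl).1
  have htop : F 0 = ⊤ := by
    apply le_antisymm le_top
    rw [← hG.submodule_iSup_eq_top]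
    exact iSup_le fun l => hGleF (Nat.zero_le l)
  have hFbot : ∀ {k : ℕ}, N < k → F k = ⊥ := by
    intro k hk
    rw [hFF]
    have : Finset.Icc k N = ∅ := Finset.Icc_eq_empty (by omega)
    rw [this]
    simp
  have hGF0 : ∀ j (v : V), v ∈ G j → v ∈ F (j + 1) → v = 0 := by
    intro j v h1 h2
    have hGj : G j = ⨆ i ∈ ({j} : Finset ℕ), G i := by simp
    have hdisj : Disjoint (G j) (F (j + 1)) := by
      rw [hFF (j + 1), hGj]
      apply aux_disj G hind
      intro i hi
      rw [Finset.mem_singleton] at hi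
      subst hi
      rw [Finset.mem_Icc]
      omega
    exact (Submodule.disjoint_def.mp hdisj) v h1 h2
  have hmapXG : ∀ k, Submodule.map X (G k) ≤ F (k + 1) := fun k =>
    (hXgr k).trans (hGleF le_rfl)
  have hmapψG : ∀ k, Submodule.map ψ (G k) ≤ F (k + 1) := by
    intro k
    rw [Submodule.map_le_iff_le_comap]
    intro v hv
    exact hψF k v hv
  have hlead' : ∀ k, ∀ v ∈ G k, ψ v - c • X v ∈ F (k + 2) := hlead
  have hmapF : ∀ (φ : Module.End ℂ V), (∀ k, Submodule.map φ (G k) ≤ F (k + 1)) →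
      ∀ k, Submodule.map φ (F k) ≤ F (k + 1) := by
    intro φ hφ k
    have heq : Submodule.map φ (F k) = ⨆ l, ⨆ (_ : k ≤ l), Submodule.map φ (G l) := by
      simp only [hFdef, Submodule.map_iSup]
    rw [heq]
    exact iSup₂_le fun l hl => (hφ l).trans (hFmono (by omega))
  have hmapPowF : ∀ (φ : Module.End ℂ V), (∀ k, Submodule.map φ (F k) ≤ F (k + 1)) →
      ∀ (t k : ℕ), Submodule.map (φ ^ t) (F k) ≤ F (k + t) := by
    intro φ hφ t
    induction t with
    | zero => intro k; simp [Module.End.one_eq_id, Submodule.map_id]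
    | succ t ih =>
      intro k
      rw [pow_succ, Module.End.mul_eq_comp, Submodule.map_comp]
      refine le_trans (le_trans (Submodule.map_mono (hφ k)) (ih (k + 1))) ?_
      rw [show k + 1 + t = k + (t + 1) from by omega]
  have hXpowG : ∀ (t k : ℕ), Submodule.map (X ^ t) (G k) ≤ G (k + t) := by
    intro t
    induction t with
    | zero => intro k; simp [Module.End.one_eq_id, Submodule.map_id]
    | succ t ih =>
      intro k
      rw [pow_succ, Module.End.mul_eq_comp, Submodule.map_comp]
      refine le_trans (le_trans (Submodule.map_mono (hXgr k)) (ih (k + 1))) ?_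
      rw [show k + 1 + t = k + (t + 1) from by omega]
  -- aeval machinery
  have haevalG : ∀ (p : Polynomial ℂ) (B : Submodule ℂ V),
      (∀ l, l ≤ N → Submodule.map (Polynomial.aeval H p) (G l) ≤ B) →
      ∀ v : V, (Polynomial.aeval H p) v ∈ B := by
    intro p B hB v
    have hle : Submodule.map (Polynomial.aeval H p) ⊤ ≤ B := by
      rw [← hG.submodule_iSup_eq_top, Submodule.map_iSup]
      apply iSup_le
      intro l
      rcases le_or_gt l N with h | h
      · exact hB l h
      · rw [hGN l h, Submodule.map_bot]; exact bot_le
    exact hle (Submodule.mem_map_of_mem trivial)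
  have hE : ∀ j, j ≤ N → ∀ v : V, H v = Lam j • v → v ∈ G j := by
    intro j hj v hv
    set q : Polynomial ℂ :=
      ∏ l ∈ (Finset.range (N + 1)).erase j, (Polynomial.X - Polynomial.C (Lam l)) with hq
    have heval : (Polynomial.aeval H q) v = q.eval (Lam j) • v := aux_aeval H (Lam j) v hv q
    have hLamInj : ∀ a b : ℕ, Lam a = Lam b → a = b := by
      intro a b hab
      rw [hLamcast, hLamcast] at hab
      have := Int.cast_injective (α := ℂ) hab
      omega
    have hne : q.eval (Lam j) ≠ 0 := by
      rw [hq, Polynomial.eval_prod]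
      apply Finset.prod_ne_zero_iff.mpr
      intro l hl
      simp only [Polynomial.eval_sub, Polynomial.eval_X, Polynomial.eval_C]
      intro hcon
      rw [sub_eq_zero] at hcon
      exact (Finset.mem_erase.mp hl).1 (hLamInj j l hcon).symm
    have hmem : (Polynomial.aeval H q) v ∈ G j := by
      apply haevalG
      intro l hl
      rw [Submodule.map_le_iff_le_comap]
      intro u hu
      rw [Submodule.mem_comap]
      rcases eq_or_ne l j with rfl | hlj
      · rw [aux_aeval H (Lam l) u (hHG l u hu) q]
        exact Submodule.smul_mem _ _ hu
      · rw [aux_aeval H (Lam l) u (hHG l u hu) q]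
        have hz : q.eval (Lam l) = 0 := by
          rw [hq, Polynomial.eval_prod]
          apply Finset.prod_eq_zero (i := l)
            (Finset.mem_erase.mpr ⟨hlj, Finset.mem_range.mpr (by omega)⟩)
          simp
        rw [hz, zero_smul]
        exact Submodule.zero_mem _
    rw [heval] at hmem
    have := Submodule.smul_mem (G j) (q.eval (Lam j))⁻¹ hmem
    rwa [smul_smul, inv_mul_cancel₀ hne, one_smul] at this
  have hE0 : ∀ v : V, H v = ((-(N : ℤ) - 2 : ℤ) : ℂ) • v → v = 0 := by
    intro v hv
    set cv : ℂ := ((-(N : ℤ) - 2 : ℤ) : ℂ) with hcv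
    set p : Polynomial ℂ :=
      ∏ l ∈ Finset.range (N + 1), (Polynomial.X - Polynomial.C (Lam l)) with hp
    have heval : (Polynomial.aeval H p) v = p.eval cv • v := aux_aeval H cv v hv p
    have hzero : (Polynomial.aeval H p) v ∈ (⊥ : Submodule ℂ V) := by
      apply haevalG
      intro l hl
      rw [Submodule.map_le_iff_le_comap]
      intro u hu
      rw [Submodule.mem_comap, Submodule.mem_bot]
      rw [aux_aeval H (Lam l) u (hHG l u hu) p]
      have hz : p.eval (Lam l) = 0 := by
        rw [hp, Polynomial.eval_prod]
        apply Finset.prod_eq_zero (i := l) (Finset.mem_range.mpr (by omega))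
        simp
      rw [hz, zero_smul]
    rw [heval, Submodule.mem_bot] at hzero
    have hne : p.eval cv ≠ 0 := by
      rw [hp, Polynomial.eval_prod]
      apply Finset.prod_ne_zero_iff.mpr
      intro l hl
      simp only [Polynomial.eval_sub, Polynomial.eval_X, Polynomial.eval_C]
      intro hcon
      rw [sub_eq_zero] at hcon
      have h1 : ((-(N : ℤ) - 2 : ℤ) : ℂ) = ((2 * (l : ℤ) - N : ℤ) : ℂ) := by
        rw [← hLamcast l, ← hcon, hcv]
      have := Int.cast_injective (α := ℂ) h1
      omega
    rcases smul_eq_zero.mp hzero with h | h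
    · exact absurd h hne
    · exact h
  have hHY' : ∀ (v : V) (cv : ℂ), H v = cv • v → H (Y v) = (cv - 2) • Y v := by
    intro v cv hv
    have h1 : (H * Y) v - (Y * H) v = ((-2 : ℂ) • Y) v := by rw [← LinearMap.sub_apply, hHY]
    simp only [Module.End.mul_apply, LinearMap.smul_apply] at h1
    rw [hv, map_smul] at h1
    have h2 : H (Y v) = (-2 : ℂ) • Y v + cv • Y v := by
      rw [← h1]; abel
    rw [h2]
    module
  -- claim C : no negative "XY-eigenvalue" in low weight
  have hC : ∀ k, 2 * k ≤ N → ∀ v ∈ G k, ∀ lam : ℂ, X (Y v) = lam • v → lam.re < 0 → v = 0 := by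
    intro k
    induction k with
    | zero =>
      intro _ v hv lam hXYv hre
      have hμ : H v = Lam 0 • v := hHG 0 v hv
      have hw : H (Y v) = (Lam 0 - 2) • Y v := hHY' v _ hμ
      have hY0 : Y v = 0 := by
        apply hE0
        rw [show ((-(N : ℤ) - 2 : ℤ) : ℂ) = Lam 0 - 2 from by
          rw [hLamcast]; push_cast; ring]
        exact hw
      have hz : lam • v = 0 := by rw [← hXYv, hY0, map_zero]
      have hlamne : lam ≠ 0 := fun h => by simp [h] at hre
      rcases smul_eq_zero.mp hz with h | h
      · exact absurd h hlamne
      · exact h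
    | succ k ih =>
      intro hk v hv lam hXYv hre
      have hμ : H v = Lam (k + 1) • v := hHG (k + 1) v hv
      have hw : H (Y v) = Lam k • Y v := by
        rw [hHY' v _ hμ, show Lam (k + 1) - 2 = Lam k from by
          rw [hLamcast, hLamcast]; push_cast; ring]
      have hwG : Y v ∈ G k := hE k (by omega) (Y v) hw
      have hYXw : Y (X (Y v)) = lam • Y v := by rw [hXYv, map_smul]
      have hXYw : X (Y (Y v)) = (lam + Lam k) • Y v := by
        have h1 : (X * Y) (Y v) - (Y * X) (Y v) = H (Y v) := by
          rw [← LinearMap.sub_apply, hXY]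
        simp only [Module.End.mul_apply] at h1
        rw [hYXw, hw] at h1
        have h2 := eq_add_of_sub_eq h1
        rw [h2]
        module
      have hrew : (lam + Lam k).re < 0 := by
        rw [Complex.add_re]
        have h1 : (Lam k).re = ((2 * (k : ℤ) - N : ℤ) : ℝ) := by
          rw [hLamcast]
          exact Complex.intCast_re _
        have h2 : ((2 * (k : ℤ) - N : ℤ) : ℝ) ≤ -2 := by
          have : (2 * (k : ℤ) - N : ℤ) ≤ -2 := by omega
          exact_mod_cast this
        rw [h1]
        linarith
      have hYv0 : Y v = 0 := ih (by omega) (Y v) hwG (lam + Lam k) hXYw hrew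
      have hz : lam • v = 0 := by rw [← hXYv, hYv0, map_zero]
      have hlamne : lam ≠ 0 := fun h => by simp [h] at hre
      rcases smul_eq_zero.mp hz with h | h
      · exact absurd h hlamne
      · exact h
  -- commutation identity
  have hYX : Y * X = X * Y - H := by rw [← hXY]; noncomm_ring
  have hHX' : H * X = (2 : ℂ) • X + X * H := eq_add_of_sub_eq hHX
  have komm : ∀ n : ℕ, Y * X ^ (n + 1)
      = X ^ (n + 1) * Y
        - X ^ n * (((n : ℂ) + 1) • H + (((n : ℂ) + 1) * (n : ℂ)) • (1 : Module.End ℂ V)) := by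
    intro n
    induction n with
    | zero =>
      simp only [pow_one, pow_zero, Nat.cast_zero, zero_add, one_smul, mul_zero, zero_smul,
        add_zero, one_mul]
      rw [hYX]
    | succ n ih =>
      have e1 : Y * X ^ (n + 1 + 1) = (Y * X ^ (n + 1)) * X := by
        rw [mul_assoc, ← pow_succ]
      push_cast
      rw [e1, ih]
      simp only [sub_mul, add_mul, smul_mul_assoc, one_mul, hYX, hHX', mul_add, mul_sub,
        mul_smul_comm, smul_add, smul_sub, smul_smul, mul_assoc, pow_succ, mul_one]
      module
  -- X (Y v) stays in G k
  have hXYmemG : ∀ k, k ≤ N → ∀ v ∈ G k, X (Y v) ∈ G k := by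
    intro k
    cases k with
    | zero =>
      intro _ v hv
      have hY0 : Y v = 0 := by
        apply hE0
        rw [show ((-(N : ℤ) - 2 : ℤ) : ℂ) = Lam 0 - 2 from by
          rw [hLamcast]; push_cast; ring]
        exact hHY' v _ (hHG 0 v hv)
      rw [hY0, map_zero]
      exact Submodule.zero_mem _
    | succ k =>
      intro hk v hv
      have hw : H (Y v) = Lam k • Y v := by
        rw [hHY' v _ (hHG (k + 1) v hv), show Lam (k + 1) - 2 = Lam k from by
          rw [hLamcast, hLamcast]; push_cast; ring]
      have hwG : Y v ∈ G k := hE k (by omega) (Y v) hw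
      exact hXgr k (Submodule.mem_map_of_mem hwG)
  -- the injectivity result J
  have hJ : ∀ t k, 2 * k + t ≤ N → ∀ v ∈ G k, (X ^ t) v = 0 → v = 0 := by
    intro t
    induction t with
    | zero =>
      intro k _ v _ h
      simpa using h
    | succ t ih =>
      intro k hk v hv hX0
      have hμ : H v = Lam k • v := hHG k v hv
      have h0 : (Y * X ^ (t + 1)) v = 0 := by rw [Module.End.mul_apply, hX0, map_zero]
      rw [komm t] at h0
      simp only [LinearMap.sub_apply, Module.End.mul_apply, LinearMap.add_apply,
        LinearMap.smul_apply, Module.End.one_apply] at h0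
      rw [hμ] at h0
      set lam : ℂ := ((t : ℂ) + 1) * Lam k + ((t : ℂ) + 1) * (t : ℂ) with hlamdef2
      have h2 : (X ^ (t + 1)) (Y v) = (X ^ t) (X (Y v)) := by
        rw [pow_succ, Module.End.mul_apply]
      rw [h2] at h0
      have h3 : ((t : ℂ) + 1) • (Lam k • v) + (((t : ℂ) + 1) * (t : ℂ)) • v = lam • v := by
        rw [hlamdef2]; module
      rw [h3] at h0
      have h1 : (X ^ t) (X (Y v) - lam • v) = 0 := by
        rw [map_sub, map_smul, ← map_smul (X ^ t)]
        rw [sub_eq_zero]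
        rw [sub_eq_zero] at h0
        exact h0
      have hu : X (Y v) - lam • v ∈ G k :=
        sub_mem (hXYmemG k (by omega) v hv) (Submodule.smul_mem _ _ hv)
      have hu0 := ih k (by omega) _ hu h1
      have hXYv : X (Y v) = lam • v := by rwa [sub_eq_zero] at hu0
      have hlamInt : lam = (((t + 1 : ℤ) * (2 * k - N + t) : ℤ) : ℂ) := by
        rw [hlamdef2, hLamcast]
        push_cast
        ring
      have hre : lam.re < 0 := by
        rw [hlamInt, Complex.intCast_re]
        have hneg : ((t + 1 : ℤ) * (2 * k - N + t) : ℤ) < 0 :=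
          mul_neg_of_pos_of_neg (by omega) (by omega)
        exact_mod_cast hneg
      exact hC k (by omega) v hv lam hXYv hre
  -- leading term lemma K
  have hK : ∀ (φ : Module.End ℂ V) (c' : ℂ), (∀ k, Submodule.map φ (G k) ≤ F (k + 1)) →
      (∀ k, ∀ v ∈ G k, φ v - c' • X v ∈ F (k + 2)) →
      ∀ (t k : ℕ) (v : V), v ∈ G k → (φ ^ t) v - (c' ^ t) • (X ^ t) v ∈ F (k + t + 1) := by
    intro φ c' hφG hφl t
    induction t with
    | zero =>
      intro k v hv
      simp only [pow_zero, Module.End.one_apply, one_smul, sub_self]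
      exact Submodule.zero_mem _
    | succ t ih =>
      intro k v hv
      have hXt : (X ^ t) v ∈ G (k + t) := hXpowG t k ⟨v, hv, rfl⟩
      have e1 : (φ ^ (t + 1)) v - (c' ^ (t + 1)) • (X ^ (t + 1)) v
          = φ ((φ ^ t) v - (c' ^ t) • (X ^ t) v)
            + (c' ^ t) • (φ ((X ^ t) v) - c' • X ((X ^ t) v)) := by
        simp only [pow_succ', Module.End.mul_apply, map_sub, map_smul, smul_sub, smul_smul]
        module
      rw [e1]
      apply Submodule.add_mem
      · have h3 : φ ((φ ^ t) v - (c' ^ t) • (X ^ t) v) ∈ Submodule.map φ (F (k + t + 1)) :=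
          Submodule.mem_map_of_mem (ih k v hv)
        have h4 := (hmapF φ hφG (k + t + 1)) h3
        rwa [show k + t + 1 + 1 = k + (t + 1) + 1 from by omega] at h4
      · apply Submodule.smul_mem
        have h5 := hφl (k + t) _ hXt
        rwa [show k + t + 2 = k + (t + 1) + 1 from by omega] at h5
  -- splitting of suprema
  have hsplitU : ∀ (U : ℕ → Submodule ℂ V) (k0 : ℕ),
      (⨆ k, ⨆ (_ : k0 ≤ k), U k) = U k0 ⊔ (⨆ k, ⨆ (_ : k0 + 1 ≤ k), U k) := by
    intro U k0
    apply le_antisymm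
    · apply iSup₂_le
      intro k hk
      rcases eq_or_lt_of_le hk with rfl | h
      · exact le_sup_left
      · exact le_sup_of_le_right (le_iSup_of_le k (le_iSup (fun _ : k0 + 1 ≤ k => U k) h))
    · apply sup_le
      · exact le_iSup_of_le k0 (le_iSup (fun _ : k0 ≤ k0 => U k0) le_rfl)
      · exact iSup₂_le fun k hk =>
          le_iSup_of_le k (le_iSup (fun _ : k0 ≤ k => U k) (by omega))
  -- graded injectivity lemma
  have grinj : ∀ (φ : Module.End ℂ V) (c' : ℂ), c' ≠ 0 →
      (∀ k, Submodule.map φ (G k) ≤ F (k + 1)) →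
      (∀ k, ∀ v ∈ G k, φ v - c' • X v ∈ F (k + 2)) →
      ∀ (t : ℕ) (U : ℕ → Submodule ℂ V), (∀ k, U k ≤ G k) →
      (∀ k, ∀ u ∈ U k, (X ^ t) u = 0 → u = 0) →
      ∀ v ∈ (⨆ k, U k), (φ ^ t) v = 0 → v = 0 := by
    intro φ c' hc' hφG hφl t U hUG hUinj
    have main : ∀ (j k0 : ℕ), N + 1 ≤ k0 + j →
        ∀ v ∈ (⨆ k, ⨆ (_ : k0 ≤ k), U k), (φ ^ t) v = 0 → v = 0 := by
      intro j
      induction j with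
      | zero =>
        intro k0 hk0 v hv _
        have hle : (⨆ k, ⨆ (_ : k0 ≤ k), U k) ≤ ⊥ :=
          iSup₂_le fun k hk => le_trans (hUG k) (le_of_eq (hGN k (by omega)))
        simpa using hle hv
      | succ j ih =>
        intro k0 hk0 v hv hv0
        rw [hsplitU U k0] at hv
        obtain ⟨u, hu, w, hw, rfl⟩ := Submodule.mem_sup.mp hv
        have h1 := hK φ c' hφG hφl t k0 u (hUG k0 hu)
        have hwF : w ∈ F (k0 + 1) :=
          (iSup₂_le fun k hk => (hUG k).trans (hGleF hk)) hw
        have h2 : (φ ^ t) w ∈ F (k0 + t + 1) := by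
          have := hmapPowF φ (hmapF φ hφG) t (k0 + 1) (Submodule.mem_map_of_mem hwF)
          rwa [show k0 + 1 + t = k0 + t + 1 from by omega] at this
        have hXu : (X ^ t) u ∈ G (k0 + t) := hXpowG t k0 ⟨u, hUG k0 hu, rfl⟩
        have h3 : (c' ^ t) • (X ^ t) u ∈ F (k0 + t + 1) := by
          have heq : (c' ^ t) • (X ^ t) u
              = ((φ ^ t) (u + w)) - ((φ ^ t) u - (c' ^ t) • (X ^ t) u) - (φ ^ t) w := by
            rw [map_add]; abel
          rw [heq, hv0, zero_sub]
          exact Submodule.sub_mem _ (Submodule.neg_mem _ h1) h2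
        have hXu0 : (X ^ t) u = 0 := by
          have h4 : (c' ^ t) • (X ^ t) u = 0 :=
            hGF0 (k0 + t) _ (Submodule.smul_mem _ _ hXu) h3
          rcases smul_eq_zero.mp h4 with h | h
          · exact absurd h (pow_ne_zero t hc')
          · exact h
        have hu0 : u = 0 := hUinj k0 u hu hXu0
        rw [hu0, zero_add]
        rw [hu0, zero_add] at hv0
        exact ih (k0 + 1) (by omega) w hw hv0
    intro v hv hv0
    refine main (N + 1) 0 (by omega) v ?_ hv0
    have hle : (⨆ k, U k) ≤ (⨆ k, ⨆ (_ : (0 : ℕ) ≤ k), U k) :=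
      iSup_le fun k => le_iSup_of_le k (le_iSup (fun _ : (0 : ℕ) ≤ k => U k) (Nat.zero_le k))
    exact hle hv
  -- PART (i) : rank X^s ≤ rank ψ^s
  have hUex : ∀ k, ∃ Uk : Submodule ℂ V, Uk ≤ G k ∧ (∀ u ∈ Uk, (X ^ s) u = 0 → u = 0) ∧
      Module.finrank ℂ Uk = Module.finrank ℂ (Submodule.map (X ^ s) (G k)) := by
    intro k
    obtain ⟨U', hU'⟩ :=
      Submodule.exists_isCompl (Submodule.comap (G k).subtype (LinearMap.ker (X ^ s)))
    refine ⟨Submodule.map (G k).subtype U', Submodule.map_subtype_le _ _, ?_, ?_⟩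
    · rintro u ⟨u', hu', rfl⟩ h0
      have hm : u' ∈ Submodule.comap (G k).subtype (LinearMap.ker (X ^ s)) := by
        simpa [Submodule.mem_comap, LinearMap.mem_ker] using h0
      have : u' ∈ Submodule.comap (G k).subtype (LinearMap.ker (X ^ s)) ⊓ U' := ⟨hm, hu'⟩
      rw [hU'.inf_eq_bot] at this
      rw [Submodule.mem_bot] at this
      rw [this]
      simp
    · have e1 : Module.finrank ℂ (Submodule.map (G k).subtype U') = Module.finrank ℂ U' :=
        Submodule.finrank_map_subtype_eq (G k) U'
      have e2 := Submodule.finrank_add_eq_of_isCompl hU'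
      have e3 := LinearMap.finrank_range_add_finrank_ker ((X ^ s) ∘ₗ (G k).subtype)
      rw [LinearMap.range_comp, Submodule.range_subtype, LinearMap.ker_comp] at e3
      omega
  choose U hU1 hU2 hU3 using hUex
  have hUind : iSupIndep U := hind.mono hU1
  have hTfin : (⨆ k, U k) = ⨆ k ∈ Finset.range (N + 1), U k := by
    apply le_antisymm
    · apply iSup_le
      intro k
      rcases le_or_gt k N with h | h
      · exact le_iSup_of_le k (le_iSup (fun _ : k ∈ Finset.range (N + 1) => U k)
          (Finset.mem_range.mpr (by omega)))
      · exact le_trans (le_trans (hU1 k) (le_of_eq (hGN k h))) bot_le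
    · exact iSup₂_le fun k _ => le_iSup U k
  have hMind : iSupIndep (fun k => Submodule.map (X ^ s) (G k)) := by
    have hshift : iSupIndep (fun k => G (k + s)) :=
      hind.comp (fun a b hab => by omega)
    exact hshift.mono fun k => hXpowG s k
  have hrangeX : LinearMap.range (X ^ s) = ⨆ k ∈ Finset.range (N + 1), Submodule.map (X ^ s) (G k) := by
    rw [LinearMap.range_eq_map, ← hG.submodule_iSup_eq_top, Submodule.map_iSup]
    apply le_antisymm
    · apply iSup_le
      intro k
      rcases le_or_gt k N with h | h
      · exact le_iSup_of_le k
          (le_iSup (fun _ : k ∈ Finset.range (N + 1) => Submodule.map (X ^ s) (G k))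
            (Finset.mem_range.mpr (by omega)))
      · rw [hGN k h, Submodule.map_bot]; exact bot_le
    · exact iSup₂_le fun k _ => le_iSup (fun k => Submodule.map (X ^ s) (G k)) k
  have hrankX_eq : Module.finrank ℂ (LinearMap.range (X ^ s))
      = Module.finrank ℂ ↥(⨆ k, U k) := by
    rw [hrangeX, hTfin, aux_sum _ hMind, aux_sum _ hUind]
    exact Finset.sum_congr rfl fun k _ => (hU3 k).symm
  have main_ge : Module.finrank ℂ (LinearMap.range (X ^ s))
      ≤ Module.finrank ℂ (LinearMap.range (ψ ^ s)) := by
    rw [hrankX_eq]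
    have hinj : ∀ v ∈ (⨆ k, U k), (ψ ^ s) v = 0 → v = 0 :=
      grinj ψ c hc hmapψG hlead' s U hU1 hU2
    have heq := aux_finrank_map_eq (ψ ^ s) (⨆ k, U k) hinj
    rw [← heq]
    exact Submodule.finrank_mono LinearMap.map_le_range
  -- now split into cases on s
  rcases Nat.eq_zero_or_pos s with rfl | hs1
  · rw [pow_zero, pow_zero]
  rcases le_or_gt s N with hsN | hsN
  swap
  · -- s > N : both ranks are zero
    have hz : ∀ (φ : Module.End ℂ V), (∀ k, Submodule.map φ (G k) ≤ F (k + 1)) →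
        LinearMap.range (φ ^ s) = ⊥ := by
      intro φ hφ
      apply le_antisymm _ bot_le
      rw [LinearMap.range_eq_map, ← htop]
      have := hmapPowF φ (hmapF φ hφ) s 0
      rw [show (0 : ℕ) + s = s from by omega] at this
      exact this.trans (le_of_eq (hFbot hsN))
    rw [hz ψ hmapψG, hz X hmapXG]
  -- main case 1 ≤ s ≤ N
  · set m : ℕ := (N - s) / 2 with hm
    have hdiv := Nat.div_add_mod (N - s) 2
    have hmod : (N - s) % 2 < 2 := Nat.mod_lt _ (by omega)
    have hm1 : 2 * m + s ≤ N := by omega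
    have hm2 : N ≤ 2 * m + s + 1 := by omega
    set SS : Submodule ℂ V := ⨆ k ∈ Finset.range (m + 1), G k with hSS
    have htople : (⊤ : Submodule ℂ V) ≤ SS ⊔ F (m + 1) := by
      rw [← hG.submodule_iSup_eq_top]
      apply iSup_le
      intro k
      rcases le_or_gt k m with h | h
      · exact le_sup_of_le_left (le_iSup_of_le k
          (le_iSup (fun _ : k ∈ Finset.range (m + 1) => G k) (Finset.mem_range.mpr (by omega))))
      · exact le_sup_of_le_right (hGleF h)
    -- upper bound for rank ψ^s
    have hub : Module.finrank ℂ (LinearMap.range (ψ ^ s))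
        ≤ Module.finrank ℂ SS + Module.finrank ℂ (F (m + 1 + s)) := by
      have h1 : LinearMap.range (ψ ^ s) ≤ Submodule.map (ψ ^ s) SS ⊔ F (m + 1 + s) := by
        rw [LinearMap.range_eq_map]
        refine le_trans (Submodule.map_mono htople) ?_
        rw [Submodule.map_sup]
        exact sup_le le_sup_left
          (le_sup_of_le_right (hmapPowF ψ (hmapF ψ hmapψG) s (m + 1)))
      have h2 := Submodule.finrank_mono h1
      have h3 := Submodule.finrank_sup_add_finrank_inf_eq
        (Submodule.map (ψ ^ s) SS) (F (m + 1 + s))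
      have h4 := Submodule.finrank_map_le (ψ ^ s) SS
      omega
    -- X^s is injective on SS
    have hXinjSS : ∀ v ∈ SS, (X ^ s) v = 0 → v = 0 := by
      have h := grinj X 1 one_ne_zero hmapXG
        (fun k v hv => by rw [one_smul, sub_self]; exact Submodule.zero_mem _) s
        (fun k => if k ≤ m then G k else ⊥)
        (fun k => by split_ifs; exacts [le_rfl, bot_le])
        (fun k u hu h0 => by
          split_ifs at hu with hk
          · exact hJ s k (by omega) u hu h0
          · simpa using hu)
      intro v hv hv0
      refine h v ?_ hv0
      have hle : SS ≤ ⨆ k, (fun k => if k ≤ m then G k else ⊥) k := by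
        apply iSup₂_le
        intro k hk
        have hk' : k ≤ m := by
          have := Finset.mem_range.mp hk
          omega
        refine le_iSup_of_le k ?_
        dsimp only
        rw [if_pos hk']
      exact hle hv
    -- hard Lefschetz
    have hHL : ∀ k, 2 * k ≤ N → Submodule.map (X ^ (N - 2 * k)) (G k) = G (N - k) := by
      intro k hk
      have hle : Submodule.map (X ^ (N - 2 * k)) (G k) ≤ G (N - k) := by
        have := hXpowG (N - 2 * k) k
        rwa [show k + (N - 2 * k) = N - k from by omega] at this
      apply Submodule.eq_of_le_of_finrank_le hle
      rw [aux_finrank_map_eq _ _ (fun v hv h0 => hJ (N - 2 * k) k (by omega) v hv h0)]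
      exact le_of_eq (hsym k (by omega)).symm
    -- surjectivity onto high part
    have hsurj : F (m + 1 + s) ≤ LinearMap.range (X ^ s) := by
      rw [hFF]
      apply iSup₂_le
      intro l hl
      rw [Finset.mem_Icc] at hl
      obtain ⟨hl1, hl2⟩ := hl
      have h2l : N + s ≤ 2 * l := by omega
      have hk' : 2 * (N - l) ≤ N := by omega
      have hHLl := hHL (N - l) hk'
      rw [show N - 2 * (N - l) = 2 * l - N from by omega,
        show N - (N - l) = l from by omega] at hHLl
      have hcalc : G l ≤ Submodule.map (X ^ s) (G (l - s)) := by
        rw [← hHLl, show 2 * l - N = s + (2 * l - N - s) from by omega, pow_add,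
          Module.End.mul_eq_comp, Submodule.map_comp]
        apply Submodule.map_mono
        have := hXpowG (2 * l - N - s) (N - l)
        rwa [show N - l + (2 * l - N - s) = l - s from by omega] at this
      exact hcalc.trans LinearMap.map_le_range
    -- disjointness
    have hmapSS : Submodule.map (X ^ s) SS ≤ ⨆ i ∈ Finset.range (m + 1 + s), G i := by
      rw [hSS]
      simp only [Submodule.map_iSup]
      apply iSup₂_le
      intro k hk
      rw [Finset.mem_range] at hk
      exact le_trans (hXpowG s k) (le_iSup_of_le (k + s)
        (le_iSup (fun _ : k + s ∈ Finset.range (m + 1 + s) => G (k + s))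
          (Finset.mem_range.mpr (by omega))))
    have hdisjSF : Disjoint (Submodule.map (X ^ s) SS) (F (m + 1 + s)) := by
      have hd := aux_disj G hind (Finset.range (m + 1 + s)) (Finset.Icc (m + 1 + s) N)
        (fun i hi => by
          rw [Finset.mem_range] at hi
          rw [Finset.mem_Icc]
          omega)
      exact hd.mono hmapSS (le_of_eq (hFF (m + 1 + s)))
    -- lower bound for rank X^s
    have hlb : Module.finrank ℂ SS + Module.finrank ℂ (F (m + 1 + s))
        ≤ Module.finrank ℂ (LinearMap.range (X ^ s)) := by
      have h1 : Submodule.map (X ^ s) SS ⊔ F (m + 1 + s) ≤ LinearMap.range (X ^ s) :=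
        sup_le LinearMap.map_le_range hsurj
      have h2 := Submodule.finrank_sup_add_finrank_inf_eq
        (Submodule.map (X ^ s) SS) (F (m + 1 + s))
      rw [hdisjSF.eq_bot, finrank_bot, add_zero] at h2
      have h3 : Module.finrank ℂ (Submodule.map (X ^ s) SS) = Module.finrank ℂ SS :=
        aux_finrank_map_eq _ _ hXinjSS
      have h4 := Submodule.finrank_mono h1
      omega
    exact le_antisymm (hub.trans hlb) main_ge
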